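/- arXiv:2510.01366 — 2 statements merged into one kernel-verified Lean document; each statement's English description precedes it below -/
import Mathlib

section
/- Let G be a graph with an edge {x, y} such that the closed neighborhood of x is contained in the closed neighborhood of y. Then for any 1 ≤ k ≤ β(G), the colon ideal (I(G∖y)^{{k}} : x) is contained in (I(G∖x)^{{k}} : y). -/
open MvPolynomial

variable {V : Type*} [Fintype V] [DecidableEq V] {K : Type*} [Field K]

/-- `C` is a vertex cover of the simple graph `G`. -/
def IsVertexCover (G : SimpleGraph V) (C : Finset V) : Prop :=
  ∀ ⦃u v : V⦄, G.Adj u v → u ∈ C ∨ v ∈ C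

/-- `C` is a minimal vertex cover of `G`. -/
def IsMinVertexCover (G : SimpleGraph V) (C : Finset V) : Prop :=
  IsVertexCover G C ∧ ∀ D : Finset V, IsVertexCover G D → D ⊆ C → D = C

/-- The minimum vertex cover number `β(G)`. -/
noncomputable def vcNum (G : SimpleGraph V) : ℕ :=
  sInf {m : ℕ | ∃ C : Finset V, IsVertexCover G C ∧ C.card = m}

/-- The `k`-th squarefree symbolic power of the edge ideal of `G`: the ideal generated
by the squarefree monomials whose support meets every minimal vertex cover of `G` in at
least `k` vertices. -/
noncomputable def sqfSymbPow (K : Type*) [Field K] (G : SimpleGraph V) (k : ℕ) :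
    Ideal (MvPolynomial V K) :=
  Ideal.span {m | ∃ A : Finset V, m = ∏ x ∈ A, X x ∧
    ∀ C : Finset V, IsMinVertexCover G C → k ≤ (A ∩ C).card}

/-- The graph `G ∖ v`: the induced subgraph on the vertices other than `v`,
realized on the same vertex set by deleting all edges through `v`. -/
def delVert (G : SimpleGraph V) (v : V) : SimpleGraph V where
  Adj a b := G.Adj a b ∧ a ≠ v ∧ b ≠ v
  symm := ⟨fun a b ⟨h, ha, hb⟩ => ⟨h.symm, hb, ha⟩⟩
  loopless := ⟨fun a ⟨h, _, _⟩ => G.irrefl h⟩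


set_option linter.unusedSectionVars false

lemma aux_exists_min (H : SimpleGraph V) (C : Finset V) (hC : IsVertexCover H C) :
    ∃ D, D ⊆ C ∧ IsMinVertexCover H D := by
  induction C using Finset.strongInductionOn with
  | _ C ih =>
    by_cases hmin : ∀ D : Finset V, IsVertexCover H D → D ⊆ C → D = C
    · exact ⟨C, subset_rfl, hC, hmin⟩
    · push_neg at hmin
      obtain ⟨D, hDc, hDC, hne⟩ := hmin
      obtain ⟨E, hEC, hE⟩ := ih D (ssubset_of_subset_of_ne hDC hne) hDc
      exact ⟨E, hEC.trans hDC, hE⟩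

lemma aux_isolated_not_mem (H : SimpleGraph V) (D : Finset V) (hD : IsMinVertexCover H D)
    (v : V) (hv : ∀ b, ¬ H.Adj v b) : v ∉ D := by
  intro hvD
  have hcov : IsVertexCover H (D.erase v) := by
    intro a b hab
    rcases hD.1 hab with h | h
    · exact Or.inl (Finset.mem_erase.2 ⟨fun h' => hv b (h' ▸ hab), h⟩)
    · exact Or.inr (Finset.mem_erase.2 ⟨fun h' => hv a (h' ▸ hab.symm), h⟩)
  have := hD.2 _ hcov (Finset.erase_subset _ _)
  rw [← this] at hvD
  exact Finset.notMem_erase v D hvD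

lemma aux_prod_X_eq (A : Finset V) :
    (∏ a ∈ A, (X a : MvPolynomial V K)) = monomial (∑ a ∈ A, Finsupp.single a 1) 1 := by
  classical
  induction A using Finset.induction_on with
  | empty => simp
  | insert _ _ h ih =>
    rw [Finset.prod_insert h, Finset.sum_insert h, ih, X, monomial_mul, one_mul]

lemma aux_indicator_apply (A : Finset V) (v : V) :
    (∑ a ∈ A, Finsupp.single a (1:ℕ)) v = if v ∈ A then 1 else 0 := by
  rw [Finsupp.finset_sum_apply]
  by_cases hv : v ∈ A
  · rw [if_pos hv, Finset.sum_eq_single v (fun b _ hb => Finsupp.single_eq_of_ne' hb)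
      (fun h => absurd hv h)]
    simp
  · rw [if_neg hv, Finset.sum_eq_zero]
    intro b hb
    exact Finsupp.single_eq_of_ne' (fun h => hv (h ▸ hb))

lemma aux_mem_sqf (H : SimpleGraph V) (k : ℕ) (p : MvPolynomial V K) :
    p ∈ sqfSymbPow K H k ↔ ∀ d ∈ p.support, ∃ A : Finset V,
      (∀ C : Finset V, IsMinVertexCover H C → k ≤ (A ∩ C).card) ∧ A ⊆ d.support := by
  have hset : {m : MvPolynomial V K | ∃ A : Finset V, m = ∏ x ∈ A, X x ∧
      ∀ C : Finset V, IsMinVertexCover H C → k ≤ (A ∩ C).card} =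
      (fun s => monomial s (1:K)) '' {s : V →₀ ℕ | ∃ A : Finset V,
        s = ∑ a ∈ A, Finsupp.single a 1 ∧
        ∀ C : Finset V, IsMinVertexCover H C → k ≤ (A ∩ C).card} := by
    ext m
    constructor
    · rintro ⟨A, rfl, hA⟩
      exact ⟨∑ a ∈ A, Finsupp.single a 1, ⟨A, rfl, hA⟩, (aux_prod_X_eq A).symm⟩
    · rintro ⟨s, ⟨A, rfl, hA⟩, rfl⟩
      exact ⟨A, (aux_prod_X_eq A).symm, hA⟩
  rw [sqfSymbPow, hset, mem_ideal_span_monomial_image]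
  apply forall₂_congr
  intro d _
  constructor
  · rintro ⟨si, ⟨A, rfl, hA⟩, hle⟩
    refine ⟨A, hA, fun a ha => ?_⟩
    have h1 := hle a
    rw [aux_indicator_apply, if_pos ha] at h1
    exact Finsupp.mem_support_iff.2 (by omega)
  · rintro ⟨A, hA, hsub⟩
    refine ⟨∑ a ∈ A, Finsupp.single a 1, ⟨A, rfl, hA⟩, fun v => ?_⟩
    rw [aux_indicator_apply]
    by_cases hv : v ∈ A
    · rw [if_pos hv]
      exact Nat.one_le_iff_ne_zero.2 (Finsupp.mem_support_iff.1 (hsub hv))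
    · simp [hv]

lemma aux_key (G : SimpleGraph V) (x y : V) (hxy : G.Adj x y)
    (hN : (G.neighborSet x ∪ {x} : Set V) ⊆ G.neighborSet y ∪ {y}) (k : ℕ)
    (A : Finset V) (hA : ∀ D, IsMinVertexCover (delVert G y) D → k ≤ (A ∩ D).card)
    (C : Finset V) (hC : IsMinVertexCover (delVert G x) C) :
    k ≤ ((insert y (A.erase x)) ∩ C).card := by
  have hisoY : ∀ b, ¬ (delVert G y).Adj y b := fun b h => h.2.1 rfl
  have hisoX : ∀ b, ¬ (delVert G x).Adj x b := fun b h => h.2.1 rfl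
  have htrans : ∀ b, G.Adj x b → b ≠ y → (delVert G x).Adj y b := by
    intro b hb hby
    have : b ∈ (G.neighborSet y ∪ {y} : Set V) := hN (Or.inl hb)
    rcases this with h | h
    · exact ⟨h, hxy.ne', hb.ne'⟩
    · exact absurd h hby
  by_cases hyC : y ∈ C
  · -- C ∪ {x} covers G∖y
    have hcov : IsVertexCover (delVert G y) (insert x C) := by
      intro a b hab
      by_cases hax : a = x
      · exact Or.inl (hax ▸ Finset.mem_insert_self x C)
      by_cases hbx : b = x
      · exact Or.inr (hbx ▸ Finset.mem_insert_self x C)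
      rcases hC.1 ⟨hab.1, hax, hbx⟩ with h | h
      · exact Or.inl (Finset.mem_insert_of_mem h)
      · exact Or.inr (Finset.mem_insert_of_mem h)
    obtain ⟨D, hDC, hD⟩ := aux_exists_min (delVert G y) _ hcov
    have hyD : y ∉ D := aux_isolated_not_mem _ _ hD y hisoY
    have hk := hA D hD
    refine le_trans hk (Finset.card_le_card_of_injOn (fun a => if a = x then y else a) ?_ ?_)
    · intro a ha
      rw [Finset.mem_coe, Finset.mem_inter] at ha
      by_cases hax : a = x
      · simp only [if_pos hax]
        exact Finset.mem_inter.2 ⟨Finset.mem_insert_self _ _, hyC⟩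
      · simp only [if_neg hax]
        refine Finset.mem_inter.2 ⟨Finset.mem_insert_of_mem (Finset.mem_erase.2 ⟨hax, ha.1⟩), ?_⟩
        rcases Finset.mem_insert.1 (hDC ha.2) with h | h
        · exact absurd h hax
        · exact h
    · intro a ha b hb hab
      simp only [Finset.coe_inter, Set.mem_inter_iff, Finset.mem_coe] at ha hb
      dsimp only at hab
      by_cases hax : a = x <;> by_cases hbx : b = x
      · rw [hax, hbx]
      · rw [if_pos hax, if_neg hbx] at hab
        exact absurd (hab ▸ hb.2) hyD
      · rw [if_neg hax, if_pos hbx] at hab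
        exact absurd (hab ▸ ha.2) hyD
      · rwa [if_neg hax, if_neg hbx] at hab
  · -- C itself covers G∖y
    have hcov : IsVertexCover (delVert G y) C := by
      intro a b hab
      by_cases hax : a = x
      · rcases hC.1 (htrans b (hax ▸ hab.1) hab.2.2) with h | h
        · exact absurd h hyC
        · exact Or.inr h
      by_cases hbx : b = x
      · rcases hC.1 (htrans a (hbx ▸ hab.1.symm) hab.2.1) with h | h
        · exact absurd h hyC
        · exact Or.inl h
      exact hC.1 ⟨hab.1, hax, hbx⟩
    obtain ⟨D, hDC, hD⟩ := aux_exists_min (delVert G y) _ hcov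
    have hxC : x ∉ C := aux_isolated_not_mem _ _ hC x hisoX
    refine le_trans (hA D hD) (Finset.card_le_card ?_)
    intro a ha
    rw [Finset.mem_inter] at ha
    have haC : a ∈ C := hDC ha.2
    exact Finset.mem_inter.2
      ⟨Finset.mem_insert_of_mem (Finset.mem_erase.2 ⟨fun h => hxC (h ▸ haC), ha.1⟩), haC⟩

theorem stmt8 (G : SimpleGraph V) (x y : V) (hxy : G.Adj x y)
    (hN : (G.neighborSet x ∪ {x} : Set V) ⊆ G.neighborSet y ∪ {y})
    (k : ℕ) (hk1 : 1 ≤ k) (hk2 : k ≤ vcNum G) :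
    Submodule.colon (sqfSymbPow K (delVert G y) k)
        (Ideal.span {(X x : MvPolynomial V K)}) ≤
      Submodule.colon (sqfSymbPow K (delVert G x) k)
        (Ideal.span {(X y : MvPolynomial V K)}) := by
  intro f hf
  rw [← Ideal.submodule_span_eq, Submodule.mem_colon_span_singleton, smul_eq_mul] at hf ⊢
  rw [aux_mem_sqf] at hf ⊢
  intro d hd
  rw [mul_comm, support_X_mul, Finset.mem_map] at hd
  obtain ⟨e, he, rfl⟩ := hd
  simp only [addLeftEmbedding_apply]
  obtain ⟨A, hA, hsub⟩ := hf (Finsupp.single x 1 + e) (by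
    rw [mul_comm, support_X_mul, Finset.mem_map]
    exact ⟨e, he, rfl⟩)
  refine ⟨insert y (A.erase x), fun C hC => aux_key G x y hxy hN k A hA C hC, ?_⟩
  intro a ha
  rw [Finsupp.mem_support_iff, Finsupp.add_apply, Finsupp.single_apply]
  rcases Finset.mem_insert.1 ha with rfl | ha'
  · simp
  · rw [Finset.mem_erase] at ha'
    have := hsub ha'.2
    rw [Finsupp.mem_support_iff, Finsupp.add_apply, Finsupp.single_apply,
      if_neg (fun h => ha'.1 h.symm)] at this
    omega
end

section
/- Let G be a graph with a simplicial vertex x_1 whose closed neighborhood is N_G[x_1] = {x_1, x_2, ..., x_d} for some d ≥ 2. Then for every integer k ≥ 1, the ideal quotient (I(G)^{{k}} : x_1 x_2 ⋯ x_d) equals I(G ∖ N_G[x_1])^{{k − d + 1}}, where I(H)^{{j}} denotes the j-th squarefree symbolic power (with the convention I(H)^{{j}} = R for j ≤ 0). -/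
set_option linter.unusedSectionVars false
set_option linter.unusedVariables false


open MvPolynomial

variable {V : Type*} [Fintype V] [DecidableEq V] {K : Type*} [Field K]

/-- The `j`-th squarefree symbolic power with the convention that it is the whole ring
for `j ≤ 0`. -/
noncomputable def sqfSymbPowZ (K : Type*) [Field K] (G : SimpleGraph V) (j : ℤ) :
    Ideal (MvPolynomial V K) :=
  if j ≤ 0 then ⊤ else sqfSymbPow K G j.toNat

/-- The graph `G ∖ s`: the induced subgraph on the vertices outside `s`, realized on
the same vertex set by deleting all edges meeting `s`. -/
def delVerts (G : SimpleGraph V) (s : Finset V) : SimpleGraph V where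
  Adj a b := G.Adj a b ∧ a ∉ s ∧ b ∉ s
  symm := ⟨fun _ _ ⟨h, ha, hb⟩ => ⟨h.symm, hb, ha⟩⟩
  loopless := ⟨fun a ⟨h, _, _⟩ => G.loopless.irrefl a h⟩

noncomputable def eA (A : Finset V) : V →₀ ℕ := ∑ x ∈ A, Finsupp.single x 1

lemma eA_apply (A : Finset V) (v : V) : eA A v = if v ∈ A then 1 else 0 := by
  classical
  simp only [eA, Finset.sum_apply', Finsupp.single_apply]
  exact Finset.sum_ite_eq' A v (fun _ => 1)

lemma prod_X_eq (A : Finset V) : (∏ x ∈ A, X x : MvPolynomial V K) = monomial (eA A) 1 := by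
  classical
  induction A using Finset.induction with
  | empty => simp [eA, monomial_zero']
  | @insert a s h ih =>
    rw [Finset.prod_insert h, ih]
    have he : eA (insert a s) = Finsupp.single a 1 + eA s := by
      rw [eA, eA, Finset.sum_insert h]
    rw [he, X, monomial_mul, one_mul]

lemma mem_sqf {G : SimpleGraph V} {k : ℕ} {f : MvPolynomial V K} :
    f ∈ sqfSymbPow K G k ↔ ∀ xi ∈ f.support, ∃ A : Finset V,
      (∀ C : Finset V, IsMinVertexCover G C → k ≤ (A ∩ C).card) ∧ eA A ≤ xi := by
  have : sqfSymbPow K G k = Ideal.span ((fun t => monomial t (1 : K)) ''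
      {t | ∃ A : Finset V, t = eA A ∧
        ∀ C : Finset V, IsMinVertexCover G C → k ≤ (A ∩ C).card}) := by
    unfold sqfSymbPow
    congr 1
    ext m
    constructor
    · rintro ⟨A, rfl, hA⟩
      exact ⟨eA A, ⟨A, rfl, hA⟩, (prod_X_eq A).symm⟩
    · rintro ⟨t, ⟨A, rfl, hA⟩, rfl⟩
      exact ⟨A, (prod_X_eq A).symm, hA⟩
  rw [this, mem_ideal_span_monomial_image]
  constructor
  · intro h xi hxi
    obtain ⟨si, ⟨A, rfl, hA⟩, hle⟩ := h xi hxi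
    exact ⟨A, hA, hle⟩
  · intro h xi hxi
    obtain ⟨A, hA, hle⟩ := h xi hxi
    exact ⟨eA A, ⟨A, rfl, hA⟩, hle⟩

lemma exists_min_cover {G : SimpleGraph V} :
    ∀ C : Finset V, IsVertexCover G C → ∃ D, IsMinVertexCover G D ∧ D ⊆ C := by
  intro C
  induction C using Finset.strongInductionOn with
  | _ C ih =>
    intro hC
    by_cases hmin : ∀ D, IsVertexCover G D → D ⊆ C → D = C
    · exact ⟨C, ⟨hC, hmin⟩, subset_rfl⟩
    · push_neg at hmin
      obtain ⟨D, hD, hsub, hne⟩ := hmin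
      obtain ⟨E, hE, hEs⟩ := ih D (ssubset_of_subset_of_ne hsub hne) hD
      exact ⟨E, hE, hEs.trans hsub⟩

section Main
variable {G : SimpleGraph V} {s : Finset V} {x₁ : V}

lemma cover_inter_card (hs : ∀ z : V, z ∈ s ↔ z = x₁ ∨ G.Adj x₁ z)
    (hsimp : ∀ a b : V, G.Adj x₁ a → G.Adj x₁ b → a ≠ b → G.Adj a b)
    {C : Finset V} (hC : IsVertexCover G C) : s.card - 1 ≤ (s ∩ C).card := by
  have hadj : ∀ u ∈ s, ∀ v ∈ s, u ≠ v → G.Adj u v := by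
    intro u hu v hv huv
    rcases (hs u).1 hu with rfl | hu' <;> rcases (hs v).1 hv with rfl | hv'
    · exact absurd rfl huv
    · exact hv'
    · exact hu'.symm
    · exact hsimp u v hu' hv' huv
  have h1 : (s \ C).card ≤ 1 := by
    refine Finset.card_le_one.mpr fun a ha b hb => ?_
    by_contra hab
    rcases Finset.mem_sdiff.1 ha with ⟨has, haC⟩
    rcases Finset.mem_sdiff.1 hb with ⟨hbs, hbC⟩
    rcases hC (hadj a has b hbs hab) with h | h
    exacts [haC h, hbC h]
  have := Finset.card_inter_add_card_sdiff s C
  omega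

lemma min_cover_disjoint {C' : Finset V} (hC' : IsMinVertexCover (delVerts G s) C') :
    ∀ v ∈ s, v ∉ C' := by
  intro v hv hvC'
  have hcov : IsVertexCover (delVerts G s) (C'.erase v) := by
    rintro u w ⟨h, hu, hw⟩
    rcases hC'.1 ⟨h, hu, hw⟩ with h' | h'
    · exact Or.inl (Finset.mem_erase.2 ⟨fun e => hu (e ▸ hv), h'⟩)
    · exact Or.inr (Finset.mem_erase.2 ⟨fun e => hw (e ▸ hv), h'⟩)
  have := hC'.2 _ hcov (Finset.erase_subset _ _)
  exact (Finset.erase_eq_self.1 this) hvC'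

lemma cover_restrict {C : Finset V} (hC : IsVertexCover G C) :
    IsVertexCover (delVerts G s) (C \ s) := by
  rintro u w ⟨h, hu, hw⟩
  rcases hC h with h' | h'
  · exact Or.inl (Finset.mem_sdiff.2 ⟨h', hu⟩)
  · exact Or.inr (Finset.mem_sdiff.2 ⟨h', hw⟩)

lemma cover_extend (hs : ∀ z : V, z ∈ s ↔ z = x₁ ∨ G.Adj x₁ z)
    {C' : Finset V} (hC' : IsVertexCover (delVerts G s) C') :
    IsVertexCover G (C' ∪ s.erase x₁) := by
  intro u w h
  by_cases hu : u ∈ s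
  · rcases (hs u).1 hu with rfl | _
    · have hw : w ∈ s := (hs w).2 (Or.inr h)
      exact Or.inr (Finset.mem_union_right _ (Finset.mem_erase.2 ⟨h.ne', hw⟩))
    · by_cases hux : u = x₁
      · subst hux
        have hw : w ∈ s := (hs w).2 (Or.inr h)
        exact Or.inr (Finset.mem_union_right _ (Finset.mem_erase.2 ⟨h.ne', hw⟩))
      · exact Or.inl (Finset.mem_union_right _ (Finset.mem_erase.2 ⟨hux, hu⟩))
  · by_cases hw : w ∈ s
    · by_cases hwx : w = x₁
      · subst hwx
        have hu' : u ∈ s := (hs u).2 (Or.inr h.symm)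
        exact absurd hu' hu
      · exact Or.inr (Finset.mem_union_right _ (Finset.mem_erase.2 ⟨hwx, hw⟩))
    · rcases hC' ⟨h, hu, hw⟩ with h' | h'
      · exact Or.inl (Finset.mem_union_left _ h')
      · exact Or.inr (Finset.mem_union_left _ h')

end Main

theorem stmt9 (G : SimpleGraph V) (x₁ : V) (s : Finset V)
    -- `s` is the closed neighborhood `N_G[x₁] = {x₁, x₂, …, x_d}`
    (hs : ∀ z : V, z ∈ s ↔ z = x₁ ∨ G.Adj x₁ z)
    -- `x₁` is a simplicial vertex
    (hsimp : ∀ a b : V, G.Adj x₁ a → G.Adj x₁ b → a ≠ b → G.Adj a b)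
    -- `d ≥ 2`, where `d = |N_G[x₁]|`
    (hd : 2 ≤ s.card)
    (k : ℕ) (hk : 1 ≤ k) :
    Submodule.colon (sqfSymbPow K G k)
        (Ideal.span {∏ v ∈ s, (X v : MvPolynomial V K)}) =
      sqfSymbPowZ K (delVerts G s) ((k : ℤ) - s.card + 1) := by
  classical
  have hx₁ : x₁ ∈ s := (hs x₁).2 (Or.inl rfl)
  ext f
  rw [Ideal.mem_colon_span_singleton, prod_X_eq, mem_sqf]
  have hsupp : (f * monomial (eA s) (1 : K)).support = f.support.map (addRightEmbedding (eA s)) :=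
    AddMonoidAlgebra.support_coeff_mul_single f _ (by simp) _
  rw [hsupp]
  have hmem : (∀ xi ∈ f.support.map (addRightEmbedding (eA s)), ∃ A : Finset V,
      (∀ C : Finset V, IsMinVertexCover G C → k ≤ (A ∩ C).card) ∧ eA A ≤ xi) ↔
      ∀ yi ∈ f.support, ∃ A : Finset V,
      (∀ C : Finset V, IsMinVertexCover G C → k ≤ (A ∩ C).card) ∧ eA A ≤ yi + eA s := by
    constructor
    · intro h yi hyi
      exact h (yi + eA s) (Finset.mem_map.2 ⟨yi, hyi, rfl⟩)
    · intro h xi hxi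
      obtain ⟨yi, hyi, rfl⟩ := Finset.mem_map.1 hxi
      exact h yi hyi
  rw [hmem]
  unfold sqfSymbPowZ
  by_cases h0 : (k : ℤ) - s.card + 1 ≤ 0
  · rw [if_pos h0]
    simp only [Submodule.mem_top, iff_true]
    intro yi _
    refine ⟨s, fun C hC => ?_, ?_⟩
    · have := cover_inter_card hs hsimp hC.1
      omega
    · rw [Finsupp.le_def]
      intro v
      exact Nat.le_add_left _ _
  · rw [if_neg h0, mem_sqf]
    have hdk : s.card ≤ k := by omega
    have hj : ((k : ℤ) - s.card + 1).toNat = k + 1 - s.card := by omega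
    rw [hj]
    refine forall₂_congr fun yi _ => ⟨?_, ?_⟩
    · rintro ⟨A, hP, hle⟩
      refine ⟨A \ s, fun C' hC' => ?_, ?_⟩
      · obtain ⟨C, hC, hCsub⟩ := exists_min_cover _ (cover_extend hs hC'.1)
        have hk' := hP C hC
        have hsub1 : (A ∩ C) ∩ s ⊆ s.erase x₁ := by
          intro v hv
          simp only [Finset.mem_inter] at hv
          rcases Finset.mem_union.1 (hCsub hv.1.2) with h' | h'
          · exact absurd hv.2 (fun hvs => min_cover_disjoint hC' v hvs h')
          · exact h'
        have hsub2 : (A ∩ C) \ s ⊆ (A \ s) ∩ C' := by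
          intro v hv
          rcases Finset.mem_sdiff.1 hv with ⟨hv1, hv2⟩
          rcases Finset.mem_inter.1 hv1 with ⟨hvA, hvC⟩
          rcases Finset.mem_union.1 (hCsub hvC) with h' | h'
          · exact Finset.mem_inter.2 ⟨Finset.mem_sdiff.2 ⟨hvA, hv2⟩, h'⟩
          · exact absurd (Finset.mem_of_mem_erase h') hv2
        have c1 : ((A ∩ C) ∩ s).card ≤ s.card - 1 := by
          have := Finset.card_le_card hsub1
          rwa [Finset.card_erase_of_mem hx₁] at this
        have c2 : ((A ∩ C) \ s).card ≤ ((A \ s) ∩ C').card := Finset.card_le_card hsub2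
        have c3 := Finset.card_inter_add_card_sdiff (A ∩ C) s
        omega
      · rw [Finsupp.le_def]
        intro v
        rw [eA_apply]
        by_cases hv : v ∈ A \ s
        · rcases Finset.mem_sdiff.1 hv with ⟨hvA, hvs⟩
          have := Finsupp.le_def.1 hle v
          rw [eA_apply, if_pos hvA] at this
          rw [Finsupp.add_apply, eA_apply, if_neg hvs] at this
          simpa [hv] using this
        · simp [hv]
    · rintro ⟨A', hP', hle⟩
      refine ⟨A' ∪ s, fun C hC => ?_, ?_⟩
      · obtain ⟨C'', hC'', hsub⟩ := exists_min_cover _ (cover_restrict (s := s) hC.1)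
        have h1 := hP' C'' hC''
        have h2 := cover_inter_card hs hsimp hC.1
        have hdisj : Disjoint (s ∩ C) (A' ∩ C'') := by
          refine Finset.disjoint_left.2 fun v hv hv' => ?_
          have hvC'' := (Finset.mem_inter.1 hv').2
          have := Finset.mem_sdiff.1 (hsub hvC'')
          exact this.2 (Finset.mem_inter.1 hv).1
        have hsubU : (s ∩ C) ∪ (A' ∩ C'') ⊆ (A' ∪ s) ∩ C := by
          intro v hv
          rcases Finset.mem_union.1 hv with h' | h'
          · rcases Finset.mem_inter.1 h' with ⟨h1', h2'⟩
            exact Finset.mem_inter.2 ⟨Finset.mem_union_right _ h1', h2'⟩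
          · rcases Finset.mem_inter.1 h' with ⟨h1', h2'⟩
            have := Finset.mem_sdiff.1 (hsub h2')
            exact Finset.mem_inter.2 ⟨Finset.mem_union_left _ h1', this.1⟩
        have := Finset.card_le_card hsubU
        rw [Finset.card_union_of_disjoint hdisj] at this
        omega
      · rw [Finsupp.le_def]
        intro v
        rw [eA_apply, Finsupp.add_apply, eA_apply]
        by_cases hv : v ∈ A' ∪ s
        · rcases Finset.mem_union.1 hv with h' | h'
          · have := Finsupp.le_def.1 hle v
            rw [eA_apply, if_pos h'] at this
            simp only [if_pos hv]
            omega
          · simp [hv, h']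
        · simp [hv]
end
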